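/- Let n ≥ 2 and c = (c_1,…,c_n) ∈ ℂ^n. Then the operator F(c) on V^{⊗n} satisfies F(c) = ∏_{1≤i<j≤n}^{←} R_{i,j}(c_i−c_j), i.e., the product of the factors R_{i,j}(c_i−c_j) over all pairs i < j taken in the reverse lexicographic order of (i,j) (so that the factor with (i,j)=(1,2) is the rightmost one) equals the same product taken in lexicographic order. -/

import Mathlib

/-!
We model the finite-dimensional complex vector space `V` as `ℂ^N` (i.e. `Fin N → ℂ`),
so that `V^{⊗ n}` is `(Fin n → Fin N) → ℂ` and endomorphisms of `V^{⊗ n}` are matrices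
indexed by multi-indices `Fin n → Fin N`.
-/

open scoped BigOperators

noncomputable section

/-- Endomorphisms of `V ⊗ V` for `V = ℂ^N`. -/
abbrev End2 (N : ℕ) := Matrix (Fin N × Fin N) (Fin N × Fin N) ℂ

/-- Endomorphisms of `V^{⊗ n}` for `V = ℂ^N`. -/
abbrev EndT (N n : ℕ) := Matrix (Fin n → Fin N) (Fin n → Fin N) ℂ

/-- `X_{a,b}` : the endomorphism `X` of `V ⊗ V` applied to the tensor factors `a` and `b`
(in that order) of `V^{⊗ n}`, and the identity on all other factors. -/
def op2 (N n : ℕ) (X : End2 N) (a b : Fin n) : EndT N n :=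
  fun f g => X (f a, f b) (g a, g b) *
    ∏ i : Fin n, if i ≠ a ∧ i ≠ b then (if f i = g i then (1 : ℂ) else 0) else 1

/-- The flip (permutation) operator `P : x ⊗ y ↦ y ⊗ x` on `V ⊗ V`. -/
def flipMat (N : ℕ) : End2 N := fun p q => if p.1 = q.2 ∧ p.2 = q.1 then 1 else 0

/-- `R` is a solution of the Yang--Baxter equation (with additive spectral parameters)
on `V ⊗ V ⊗ V`:  `R₁₂(u) R₁₃(u+v) R₂₃(v) = R₂₃(v) R₁₃(u+v) R₁₂(u)`. -/
def YangBaxter (N : ℕ) (R : ℂ → End2 N) : Prop :=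
  ∀ u v : ℂ,
    op2 N 3 (R u) 0 1 * op2 N 3 (R (u + v)) 0 2 * op2 N 3 (R v) 1 2 =
    op2 N 3 (R v) 1 2 * op2 N 3 (R (u + v)) 0 2 * op2 N 3 (R u) 0 1

/-- The fused operator `R_{c,c'}(u)`, acting on `V^{⊗ m}`, where the `n` factors of the first
block are embedded via `a` and the `n'` factors of the second block via `b`:
`R_{c,c'}(u) = ∏→_{i=1..n'} [ R_{n,i'}(u+c_n−c'_i) ⋯ R_{2,i'}(u+c_2−c'_i) R_{1,i'}(u+c_1−c'_i) ]`. -/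
def fusedOp (N : ℕ) (R : ℂ → End2 N) {m n n' : ℕ} (a : Fin n → Fin m) (b : Fin n' → Fin m)
    (c : Fin n → ℂ) (c' : Fin n' → ℂ) (u : ℂ) : EndT N m :=
  ((List.finRange n').map fun i =>
    (((List.finRange n).reverse).map fun k =>
      op2 N m (R (u + c k - c' i)) (a k) (b i)).prod).prod

/-- The list of pairs `(i,j)` with `i < j`, in lexicographic order. -/
def lexPairs (n : ℕ) : List (Fin n × Fin n) :=
  (List.finRange n).flatMap fun i =>
    ((List.finRange n).filter fun j => decide (i < j)).map fun j => (i, j)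

/-- The operator `F(c) = ∏→_{1 ≤ i < j ≤ n} R_{i,j}(c_i − c_j)` on `V^{⊗ n}`
(product over the pairs `i < j` in lexicographic order). -/
def Fop (N : ℕ) (R : ℂ → End2 N) {n : ℕ} (c : Fin n → ℂ) : EndT N n :=
  ((lexPairs n).map fun p => op2 N n (R (c p.1 - c p.2)) p.1 p.2).prod

/-- The endomorphism of `V^{⊗ n}` embedded into `V^{⊗ m}`, acting on the factors listed
by `e` and identically on all other factors. -/
def opBlock (N : ℕ) {m n : ℕ} (e : Fin n → Fin m) (X : EndT N n) : EndT N m :=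
  fun f g => X (f ∘ e) (g ∘ e) *
    ∏ i : Fin m, if ∀ k, e k ≠ i then (if f i = g i then (1 : ℂ) else 0) else 1

/-- The operator `P_π` on `V^{⊗ n}` permuting the tensor factors:
`P_π (x_1 ⊗ ⋯ ⊗ x_n) = x_{π(1)} ⊗ ⋯ ⊗ x_{π(n)}`. -/
def permMat (N n : ℕ) (π : Equiv.Perm (Fin n)) : EndT N n :=
  fun f g => if f = g ∘ π then 1 else 0

/-- The tensor product of a vector of `V^{⊗ n}` and a vector of `V^{⊗ n'}`,
as a vector of `V^{⊗ (n+n')}`. -/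
def tensVec (N : ℕ) {n n' : ℕ} (x : (Fin n → Fin N) → ℂ) (y : (Fin n' → Fin N) → ℂ) :
    (Fin (n + n') → Fin N) → ℂ :=
  fun f => x (fun i => f (Fin.castAdd n' i)) * y (fun j => f (Fin.natAdd n j))

end

section lemmas

variable {N n m : ℕ}

lemma delta_prod (P : Fin n → Prop) [DecidablePred P] (f g : Fin n → Fin N) :
    (∏ i : Fin n, if P i then (if f i = g i then (1 : ℂ) else 0) else 1) =
      if ∀ i, P i → f i = g i then 1 else 0 := by
  by_cases h : ∀ i, P i → f i = g i
  · rw [if_pos h]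
    apply Finset.prod_eq_one
    intro i _
    by_cases hP : P i <;> simp [hP, h i]
  · rw [if_neg h]
    push_neg at h
    obtain ⟨i, hPi, hfg⟩ := h
    exact Finset.prod_eq_zero (Finset.mem_univ i) (by simp [hPi, hfg])

lemma op2_apply (X : End2 N) (a b : Fin n) (f g : Fin n → Fin N) :
    op2 N n X a b f g = X (f a, f b) (g a, g b) *
      (if ∀ i, i ≠ a → i ≠ b → f i = g i then 1 else 0) := by
  rw [op2, delta_prod]
  congr 1
  refine if_congr ?_ rfl rfl
  constructor
  · exact fun h i h1 h2 => h i ⟨h1, h2⟩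
  · exact fun h i hi => h i hi.1 hi.2

lemma op2_mul_apply_disjoint (X Y : End2 N) {a b c d : Fin n}
    (hac : a ≠ c) (had : a ≠ d) (hbc : b ≠ c) (hbd : b ≠ d) (f g : Fin n → Fin N) :
    (op2 N n X a b * op2 N n Y c d) f g =
      X (f a, f b) (g a, g b) * Y (f c, f d) (g c, g d) *
        (if ∀ i, i ≠ a → i ≠ b → i ≠ c → i ≠ d → f i = g i then 1 else 0) := by
  rw [Matrix.mul_apply]
  set h₀ : Fin n → Fin N := fun i => if i = a then g a else if i = b then g b else f i with hh₀
  have ha : h₀ a = g a := by simp [hh₀]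
  have hb : h₀ b = g b := by
    by_cases hba : b = a
    · subst hba; simp [hh₀]
    · simp [hh₀, hba]
  have hoth : ∀ i, i ≠ a → i ≠ b → h₀ i = f i := by
    intro i h1 h2; simp [hh₀, h1, h2]
  rw [Fintype.sum_eq_single h₀]
  · rw [op2_apply, op2_apply]
    have h1 : (∀ i, i ≠ a → i ≠ b → f i = h₀ i) := fun i p q => (hoth i p q).symm
    rw [if_pos h1, ha, hb, hoth c hac.symm hbc.symm, hoth d had.symm hbd.symm]
    have h2 : (∀ i, i ≠ c → i ≠ d → h₀ i = g i) ↔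
        (∀ i, i ≠ a → i ≠ b → i ≠ c → i ≠ d → f i = g i) := by
      constructor
      · intro H i p1 p2 p3 p4
        have := H i p3 p4
        rwa [hoth i p1 p2] at this
      · intro H i p3 p4
        by_cases p1 : i = a
        · subst p1; exact ha
        by_cases p2 : i = b
        · subst p2; exact hb
        rw [hoth i p1 p2]; exact H i p1 p2 p3 p4
    rw [if_congr h2 rfl rfl]; ring
  · intro h hne
    rw [op2_apply, op2_apply]
    by_cases H1 : ∀ i, i ≠ a → i ≠ b → f i = h i
    · by_cases H2 : ∀ i, i ≠ c → i ≠ d → h i = g i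
      · exfalso; apply hne; funext i
        by_cases p1 : i = a
        · rw [p1, H2 a hac had, ha]
        by_cases p2 : i = b
        · rw [p2, H2 b hbc hbd, hb]
        rw [hoth i p1 p2]; exact (H1 i p1 p2).symm
      · simp [H2]
    · simp [H1]

lemma op2_comm (X Y : End2 N) {a b c d : Fin n}
    (hac : a ≠ c) (had : a ≠ d) (hbc : b ≠ c) (hbd : b ≠ d) :
    op2 N n X a b * op2 N n Y c d = op2 N n Y c d * op2 N n X a b := by
  ext f g
  rw [op2_mul_apply_disjoint X Y hac had hbc hbd,
    op2_mul_apply_disjoint Y X hac.symm hbc.symm had.symm hbd.symm]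
  have : (∀ i, i ≠ c → i ≠ d → i ≠ a → i ≠ b → f i = g i) ↔
      (∀ i, i ≠ a → i ≠ b → i ≠ c → i ≠ d → f i = g i) := by
    constructor <;> intro h i p1 p2 p3 p4 <;> exact h i p3 p4 p1 p2
  rw [if_congr this rfl rfl]; ring

end lemmas

section blk
variable {N n m : ℕ}

lemma opBlock_apply (e : Fin n → Fin m) (X : EndT N n) (f g : Fin m → Fin N) :
    opBlock N e X f g = X (f ∘ e) (g ∘ e) *
      (if ∀ i, (∀ k, e k ≠ i) → f i = g i then 1 else 0) := by
  rw [opBlock, delta_prod]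

lemma ite_one_zero_mul (P Q : Prop) [Decidable P] [Decidable Q] :
    (if P then (1:ℂ) else 0) * (if Q then (1:ℂ) else 0) = if P ∧ Q then 1 else 0 := by
  by_cases hP : P <;> by_cases hQ : Q <;> simp [hP, hQ]

lemma opBlock_op2 {e : Fin n → Fin m} (he : Function.Injective e) (X : End2 N) (a b : Fin n) :
    opBlock N e (op2 N n X a b) = op2 N m X (e a) (e b) := by
  ext f g
  rw [opBlock_apply, op2_apply, op2_apply]
  show X (f (e a), f (e b)) (g (e a), g (e b)) *
      (if ∀ k, k ≠ a → k ≠ b → f (e k) = g (e k) then (1:ℂ) else 0) *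
      (if ∀ i, (∀ k, e k ≠ i) → f i = g i then 1 else 0) = _
  rw [mul_assoc, ite_one_zero_mul]
  congr 1
  refine if_congr ?_ rfl rfl
  constructor
  · rintro ⟨H1, H2⟩ i hia hib
    by_cases hr : ∃ k, e k = i
    · obtain ⟨k, rfl⟩ := hr
      exact H1 k (fun hh => hia (congrArg e hh)) (fun hh => hib (congrArg e hh))
    · push_neg at hr
      exact H2 i hr
  · intro H
    constructor
    · intro k h1 h2
      exact H (e k) (fun hh => h1 (he hh)) (fun hh => h2 (he hh))
    · intro i hi
      exact H i (fun hh => hi a hh.symm) (fun hh => hi b hh.symm)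

lemma opBlock_mul {e : Fin n → Fin m} (he : Function.Injective e) (X Y : EndT N n) :
    opBlock N e (X * Y) = opBlock N e X * opBlock N e Y := by
  ext f g
  rw [opBlock_apply, Matrix.mul_apply (M := X) (N := Y)]
  have e2 : (opBlock N e X * opBlock N e Y) f g =
      ∑ h : Fin m → Fin N,
        (X (f ∘ e) (h ∘ e) * (if ∀ i, (∀ k, e k ≠ i) → f i = h i then (1:ℂ) else 0)) *
        (Y (h ∘ e) (g ∘ e) * (if ∀ i, (∀ k, e k ≠ i) → h i = g i then (1:ℂ) else 0)) := by
    rw [Matrix.mul_apply]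
    exact Finset.sum_congr rfl fun h _ => by rw [opBlock_apply, opBlock_apply]
  rw [e2]
  set S : Finset (Fin m → Fin N) :=
    Finset.univ.filter (fun h => ∀ i, (∀ k, e k ≠ i) → f i = h i) with hS
  have hvan : ∀ h ∈ (Finset.univ : Finset (Fin m → Fin N)), h ∉ S →
      (X (f ∘ e) (h ∘ e) * (if ∀ i, (∀ k, e k ≠ i) → f i = h i then (1:ℂ) else 0)) *
      (Y (h ∘ e) (g ∘ e) * (if ∀ i, (∀ k, e k ≠ i) → h i = g i then (1:ℂ) else 0)) = 0 := by
    intro h _ hh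
    simp only [hS, Finset.mem_filter, Finset.mem_univ, true_and] at hh
    rw [if_neg hh]
    ring
  have key : ∑ h : Fin m → Fin N,
      (X (f ∘ e) (h ∘ e) * (if ∀ i, (∀ k, e k ≠ i) → f i = h i then (1:ℂ) else 0)) *
      (Y (h ∘ e) (g ∘ e) * (if ∀ i, (∀ k, e k ≠ i) → h i = g i then (1:ℂ) else 0)) =
      ∑ k : Fin n → Fin N,
        X (f ∘ e) k * Y k (g ∘ e) *
          (if ∀ i, (∀ k, e k ≠ i) → f i = g i then (1:ℂ) else 0) := by
    rw [← Finset.sum_subset (Finset.subset_univ S) hvan]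
    refine Finset.sum_nbij' (i := fun h => h ∘ e) (j := fun k => Function.extend e k f)
      (fun a _ => Finset.mem_univ _) ?_ ?_ (fun k _ => by funext a; exact he.extend_apply _ _ _) ?_
    · intro k _
      rw [hS, Finset.mem_filter]
      refine ⟨Finset.mem_univ _, fun i hi => ?_⟩
      show f i = Function.extend e k f i
      rw [Function.extend_apply' _ _ _ (by push_neg; exact fun a => (hi a))]
    · intro h hh
      funext i
      show Function.extend e (h ∘ e) f i = h i
      by_cases hr : ∃ k, e k = i
      · obtain ⟨k, rfl⟩ := hr
        exact he.extend_apply _ _ _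
      · rw [Function.extend_apply' _ _ _ hr]
        rw [hS, Finset.mem_filter] at hh
        push_neg at hr
        exact hh.2 i hr
    · intro h hh
      rw [hS, Finset.mem_filter] at hh
      rw [if_pos hh.2]
      have hiff : (∀ i, (∀ k, e k ≠ i) → h i = g i) ↔ (∀ i, (∀ k, e k ≠ i) → f i = g i) := by
        constructor <;> intro H i hi
        · rw [hh.2 i hi]; exact H i hi
        · rw [← hh.2 i hi]; exact H i hi
      rw [if_congr hiff rfl rfl]
      ring
  rw [key, ← Finset.sum_mul]

end blk

section listmach
variable {α : Type*} {M : Type*} [Monoid M]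

lemma cof {a b c d : M} (h : a * b = c * d) (Z : M) : a * (b * Z) = c * (d * Z) := by
  rw [← mul_assoc, h, mul_assoc]

lemma cofgen {a b c d e g : M} (h : a * (b * c) = d * (e * g)) (Z : M) :
    a * (b * (c * Z)) = d * (e * (g * Z)) := by
  rw [show a * (b * (c * Z)) = a * (b * c) * Z by rw [mul_assoc, mul_assoc], h,
    mul_assoc, mul_assoc]

def rowP (f : α → α → M) (x : α) (s : List α) : M := (s.map (f x)).prod

def lexL : List α → List (α × α)
  | [] => []
  | x :: t => (t.map fun j => (x, j)) ++ lexL t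

def prodL (f : α → α → M) (s : List α) : M := ((lexL s).map fun p => f p.1 p.2).prod

@[simp] lemma rowP_nil (f : α → α → M) (x : α) : rowP f x [] = 1 := rfl

@[simp] lemma rowP_cons (f : α → α → M) (x y : α) (s : List α) :
    rowP f x (y :: s) = f x y * rowP f x s := by simp [rowP]

@[simp] lemma rowP_append (f : α → α → M) (x : α) (s u : List α) :
    rowP f x (s ++ u) = rowP f x s * rowP f x u := by simp [rowP]

@[simp] lemma prodL_nil (f : α → α → M) : prodL f ([] : List α) = 1 := rfl

@[simp] lemma prodL_cons (f : α → α → M) (x : α) (t : List α) :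
    prodL f (x :: t) = rowP f x t * prodL f t := by
  simp only [prodL, lexL, rowP, List.map_append, List.prod_append, List.map_map]
  rfl

variable {f : α → α → M}
variable (hcomm : ∀ a b c d : α, a ≠ c → a ≠ d → b ≠ c → b ≠ d →
    f a b * f c d = f c d * f a b)

include hcomm in
lemma rowP_comm {x c d : α} (hxc : x ≠ c) (hxd : x ≠ d) :
    ∀ {s : List α}, c ∉ s → d ∉ s → f c d * rowP f x s = rowP f x s * f c d := by
  intro s
  induction s with
  | nil => simp
  | cons z s ih =>
    intro hc hd
    have h1 : c ≠ z := fun h => hc (h ▸ List.mem_cons_self)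
    have h2 : d ≠ z := fun h => hd (h ▸ List.mem_cons_self)
    simp only [rowP_cons]
    rw [cof (hcomm c d x z hxc.symm h1 hxd.symm h2) _,
      ih (fun h => hc (List.mem_cons_of_mem _ h)) (fun h => hd (List.mem_cons_of_mem _ h)),
      ← mul_assoc]

include hcomm in
lemma pairs_comm {x y : α} :
    ∀ {L : List (α × α)}, (∀ p ∈ L, p.1 ≠ x ∧ p.1 ≠ y ∧ p.2 ≠ x ∧ p.2 ≠ y) →
      f x y * (L.map fun p => f p.1 p.2).prod = (L.map fun p => f p.1 p.2).prod * f x y := by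
  intro L
  induction L with
  | nil => simp
  | cons p L ih =>
    intro hL
    obtain ⟨h1, h2, h3, h4⟩ := hL p (List.mem_cons_self)
    simp only [List.map_cons, List.prod_cons]
    rw [cof (hcomm x y p.1 p.2 h1.symm h3.symm h2.symm h4.symm) _,
      ih (fun q hq => hL q (List.mem_cons_of_mem _ hq)), ← mul_assoc]

lemma lexL_mem : ∀ {s : List α} {p : α × α}, p ∈ lexL s → p.1 ∈ s ∧ p.2 ∈ s := by
  intro s
  induction s with
  | nil => intro p h; simp [lexL] at h
  | cons x t ih =>
    intro p hp
    simp only [lexL, List.mem_append, List.mem_map] at hp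
    rcases hp with ⟨j, hj, rfl⟩ | hp
    · exact ⟨List.mem_cons_self, List.mem_cons_of_mem _ hj⟩
    · exact ⟨List.mem_cons_of_mem _ (ih hp).1, List.mem_cons_of_mem _ (ih hp).2⟩

variable (hybe : ∀ a b c : α, a ≠ b → a ≠ c → b ≠ c →
    f a b * f a c * f b c = f b c * f a c * f a b)

include hcomm hybe in
lemma star2 {x y : α} (hxy : x ≠ y) :
    ∀ {s : List α}, s.Nodup → x ∉ s → y ∉ s →
      f x y * (rowP f x s * rowP f y s) = rowP f y s * (rowP f x s * f x y) := by
  intro s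
  induction s with
  | nil => simp
  | cons z s ih =>
    intro hnd hx hy
    have hxz : x ≠ z := fun h => hx (h ▸ List.mem_cons_self)
    have hyz : y ≠ z := fun h => hy (h ▸ List.mem_cons_self)
    have hxs : x ∉ s := fun h => hx (List.mem_cons_of_mem _ h)
    have hys : y ∉ s := fun h => hy (List.mem_cons_of_mem _ h)
    have hzs : z ∉ s := (List.nodup_cons.mp hnd).1
    have hnds : s.Nodup := (List.nodup_cons.mp hnd).2
    have c1 : f y z * rowP f x s = rowP f x s * f y z := rowP_comm hcomm hxy hxz hys hzs
    have c2 : f x z * rowP f y s = rowP f y s * f x z := rowP_comm hcomm hxy.symm hyz hxs hzs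
    have b : f x y * (f x z * f y z) = f y z * (f x z * f x y) := by
      rw [← mul_assoc, hybe x y z hxy hxz hyz, mul_assoc]
    simp only [rowP_cons]
    calc f x y * (f x z * rowP f x s * (f y z * rowP f y s))
        = f x y * (f x z * (rowP f x s * (f y z * rowP f y s))) := by
          rw [mul_assoc (f x z)]
      _ = f x y * (f x z * (f y z * (rowP f x s * rowP f y s))) := by
          rw [cof c1.symm (rowP f y s)]
      _ = f y z * (f x z * (f x y * (rowP f x s * rowP f y s))) := by
          rw [cofgen b _]
      _ = f y z * (f x z * (rowP f y s * (rowP f x s * f x y))) := by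
          rw [ih hnds hxs hys]
      _ = f y z * (rowP f y s * (f x z * (rowP f x s * f x y))) := by
          rw [cof c2 _]
      _ = f y z * rowP f y s * (f x z * rowP f x s * f x y) := by
          simp only [mul_assoc]

include hcomm hybe in
lemma star {x : α} :
    ∀ {t : List α}, t.Nodup → x ∉ t →
      rowP f x t * prodL f t = prodL f t * rowP f x t.reverse := by
  intro t
  induction t with
  | nil => simp
  | cons y t ih =>
    intro hnd hx
    have hxy : x ≠ y := fun h => hx (h ▸ List.mem_cons_self)
    have hxt : x ∉ t := fun h => hx (List.mem_cons_of_mem _ h)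
    have hyt : y ∉ t := (List.nodup_cons.mp hnd).1
    have hndt : t.Nodup := (List.nodup_cons.mp hnd).2
    have cp : f x y * prodL f t = prodL f t * f x y := by
      refine pairs_comm hcomm fun p hp => ?_
      obtain ⟨h1, h2⟩ := lexL_mem hp
      exact ⟨fun h => hxt (h ▸ h1), fun h => hyt (h ▸ h1),
        fun h => hxt (h ▸ h2), fun h => hyt (h ▸ h2)⟩
    have s2 : f x y * (rowP f x t * rowP f y t) = rowP f y t * (rowP f x t * f x y) :=
      star2 hcomm hybe hxy hndt hxt hyt
    simp only [prodL_cons, rowP_cons, List.reverse_cons, rowP_append]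
    calc f x y * rowP f x t * (rowP f y t * prodL f t)
        = f x y * (rowP f x t * (rowP f y t * prodL f t)) := by
          simp only [mul_assoc]
      _ = rowP f y t * (rowP f x t * (f x y * prodL f t)) := cofgen s2 _
      _ = rowP f y t * (rowP f x t * (prodL f t * f x y)) := by rw [cp]
      _ = rowP f y t * (prodL f t * (rowP f x t.reverse * f x y)) := by
          rw [cof (ih hndt hxt) _]
      _ = rowP f y t * prodL f t * (rowP f x t.reverse * (f x y * 1)) := by
          simp only [mul_assoc, mul_one]
      _ = rowP f y t * prodL f t * (rowP f x t.reverse * rowP f x [y]) := by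
          simp [rowP]

include hcomm hybe in
lemma prodL_reverse :
    ∀ {s : List α}, s.Nodup →
      prodL f s = (((lexL s).reverse).map fun p => f p.1 p.2).prod := by
  intro s
  induction s with
  | nil => intro _; simp [prodL, lexL]
  | cons x t ih =>
    intro hnd
    have hxt : x ∉ t := (List.nodup_cons.mp hnd).1
    have hndt : t.Nodup := (List.nodup_cons.mp hnd).2
    have : prodL f (x :: t) = prodL f t * rowP f x t.reverse := by
      rw [prodL_cons, star hcomm hybe hndt hxt]
    rw [this, ih hndt]
    show _ = ((lexL (x :: t)).reverse.map fun p => f p.1 p.2).prod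
    rw [show lexL (x :: t) = (t.map fun j => (x, j)) ++ lexL t from rfl,
      List.reverse_append, List.map_append, List.prod_append]
    congr 1
    rw [← List.map_reverse, List.map_map]
    rfl

end listmach


lemma ybe_at {N : ℕ} {R : ℂ → End2 N} (hR : YangBaxter N R) {n : ℕ} {a b c : Fin n}
    (hab : a ≠ b) (hac : a ≠ c) (hbc : b ≠ c) (u v : ℂ) :
    op2 N n (R u) a b * op2 N n (R (u + v)) a c * op2 N n (R v) b c =
    op2 N n (R v) b c * op2 N n (R (u + v)) a c * op2 N n (R u) a b := by
  have he : Function.Injective (![a, b, c]) := by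
    intro i j hij
    fin_cases i <;> fin_cases j <;>
      simp_all [Matrix.cons_val_zero, Matrix.cons_val_one, Matrix.head_cons]
  have h := congrArg (opBlock N ![a, b, c]) (hR u v)
  simp only [opBlock_mul he, opBlock_op2 he] at h
  simpa using h


lemma flatMap_helper {n : ℕ} :
    ∀ (s : List (Fin n)), List.Pairwise (· < ·) s →
      (s.flatMap fun i => ((s.filter fun j => decide (i < j)).map fun j => (i, j))) = lexL s := by
  intro s
  induction s with
  | nil => intro _; rfl
  | cons x t ih =>
    intro hp
    have hx : ∀ y ∈ t, x < y := fun y hy => (List.pairwise_cons.mp hp).1 y hy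
    have hpt : List.Pairwise (· < ·) t := (List.pairwise_cons.mp hp).2
    rw [List.flatMap_cons]
    have h1 : ((x :: t).filter fun j => decide (x < j)) = t := by
      rw [List.filter_cons]
      simp only [lt_irrefl, decide_false, if_false]
      exact List.filter_eq_self.mpr fun y hy => decide_eq_true (hx y hy)
    have h2 : (t.flatMap fun i => (((x :: t).filter fun j => decide (i < j)).map fun j => (i, j)))
        = t.flatMap fun i => ((t.filter fun j => decide (i < j)).map fun j => (i, j)) := by
      apply List.flatMap_congr
      intro i hi
      congr 1
      rw [List.filter_cons]
      simp only [decide_eq_true_eq]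
      rw [if_neg (by exact fun h => absurd (hx i hi) (asymm h))]
    rw [h1, h2, ih hpt]
    rfl

lemma lexPairs_eq_lexL (n : ℕ) : lexPairs n = lexL (List.finRange n) :=
  flatMap_helper _ (List.pairwise_lt_finRange n)


/-- The product defining `F(c)` taken in reverse lexicographic order of
the pairs `(i,j)` coincides with the product taken in lexicographic order. -/
theorem Fop_reverse_lex
    (N : ℕ) (R : ℂ → End2 N) (hR : YangBaxter N R)
    (n : ℕ) (hn : 2 ≤ n) (c : Fin n → ℂ) :
    Fop N R c =
    (((lexPairs n).reverse).map fun p => op2 N n (R (c p.1 - c p.2)) p.1 p.2).prod := by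
  have hcomm : ∀ a b c' d : Fin n, a ≠ c' → a ≠ d → b ≠ c' → b ≠ d →
      op2 N n (R (c a - c b)) a b * op2 N n (R (c c' - c d)) c' d =
      op2 N n (R (c c' - c d)) c' d * op2 N n (R (c a - c b)) a b :=
    fun a b c' d h1 h2 h3 h4 => op2_comm _ _ h1 h2 h3 h4
  have hybe : ∀ a b c' : Fin n, a ≠ b → a ≠ c' → b ≠ c' →
      op2 N n (R (c a - c b)) a b * op2 N n (R (c a - c c')) a c' *
        op2 N n (R (c b - c c')) b c' =
      op2 N n (R (c b - c c')) b c' * op2 N n (R (c a - c c')) a c' *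
        op2 N n (R (c a - c b)) a b := by
    intro a b c' h1 h2 h3
    have h := ybe_at hR h1 h2 h3 (c a - c b) (c b - c c')
    rwa [show c a - c b + (c b - c c') = c a - c c' by ring] at h
  have key := prodL_reverse (f := fun a b => op2 N n (R (c a - c b)) a b)
    hcomm hybe (List.nodup_finRange n)
  rw [Fop, lexPairs_eq_lexL]
  exact key
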